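/- For every γ ∈ (0,1) with γ < a + b*γ + a*γ^2, the functions F1 and F2 are differentiable at γ and F1'(γ) > F2'(γ). -/

import Mathlib

/-- `F1(γ) = (b γ + 2 a γ²) (-log γ)`. -/
noncomputable def F1 (a b γ : ℝ) : ℝ := (b * γ + 2 * a * γ ^ 2) * (-Real.log γ)

/-- `F2(γ) = (a + b γ + a γ²) (-log(a + b γ + a γ²))`. -/
noncomputable def F2 (a b γ : ℝ) : ℝ :=
  (a + b * γ + a * γ ^ 2) * (-Real.log (a + b * γ + a * γ ^ 2))

theorem stmt_3 (a b : ℝ) (ha : 0 < a) (hb : 0 < b) (γ : ℝ) (hγ : γ ∈ Set.Ioo (0 : ℝ) 1)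
    (hlt : γ < a + b * γ + a * γ ^ 2) :
    DifferentiableAt ℝ (F1 a b) γ ∧ DifferentiableAt ℝ (F2 a b) γ ∧
      deriv (F2 a b) γ < deriv (F1 a b) γ := by
  obtain ⟨hγ0, hγ1⟩ := hγ
  have hγne : γ ≠ 0 := ne_of_gt hγ0
  set P : ℝ := a + b * γ + a * γ ^ 2 with hP
  have hPpos : 0 < P := lt_trans hγ0 hlt
  have hPne : P ≠ 0 := ne_of_gt hPpos
  -- derivative of F1
  have hpoly1 : HasDerivAt (fun x : ℝ => b * x + 2 * a * x ^ 2) (b + 2 * a * (2 * γ ^ 1)) γ := by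
    have := ((hasDerivAt_id γ).const_mul b).add ((hasDerivAt_pow 2 γ).const_mul (2 * a))
    simpa [Pi.add_def] using this
  have hlog1 : HasDerivAt (fun x : ℝ => -Real.log x) (-(1/γ)) γ := by
    simpa [Pi.neg_def] using (Real.hasDerivAt_log hγne).neg
  have hF1 : HasDerivAt (F1 a b)
      ((b + 2 * a * (2 * γ ^ 1)) * (-Real.log γ) + (b * γ + 2 * a * γ ^ 2) * (-(1/γ))) γ := by
    unfold F1; exact hpoly1.mul hlog1
  -- derivative of F2
  have hpoly2 : HasDerivAt (fun x : ℝ => a + b * x + a * x ^ 2) (b + a * (2 * γ ^ 1)) γ := by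
    have := (((hasDerivAt_const γ a).add ((hasDerivAt_id γ).const_mul b)).add
      ((hasDerivAt_pow 2 γ).const_mul a))
    simpa [Pi.add_def] using this
  have hlog2 : HasDerivAt (fun x : ℝ => -Real.log (a + b * x + a * x ^ 2))
      (-((b + a * (2 * γ ^ 1)) / P)) γ := by
    exact (hpoly2.log hPne).neg
  have hF2 : HasDerivAt (F2 a b)
      ((b + a * (2 * γ ^ 1)) * (-Real.log P) + P * (-((b + a * (2 * γ ^ 1)) / P))) γ := by
    unfold F2; exact hpoly2.mul hlog2
  refine ⟨hF1.differentiableAt, hF2.differentiableAt, ?_⟩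
  rw [hF1.deriv, hF2.deriv]
  have hlogγ : Real.log γ < 0 := Real.log_neg hγ0 hγ1
  have hloglt : Real.log γ < Real.log P := Real.log_lt_log hγ0 hlt
  have hPdiv : P * (-((b + a * (2 * γ ^ 1)) / P)) = -(b + 2 * a * γ) := by
    field_simp
  rw [hPdiv]
  have h1 : (b * γ + 2 * a * γ ^ 2) * (-(1/γ)) = -(b + 2 * a * γ) := by
    field_simp
  rw [h1]
  have hcoef : 0 < b + 2 * a * γ := by positivity
  have : (b + 2 * a * γ) * Real.log γ < (b + 2 * a * γ) * Real.log P :=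
    mul_lt_mul_of_pos_left hloglt hcoef
  nlinarith [mul_pos ha hγ0]
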